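/- arXiv:1310.3481 — 2 statements merged into one kernel-verified Lean document; each statement's English description precedes it below -/
import Mathlib

section
/- Correctness theorem: Let D be a pre-Kleene algebra, sem : E → D a function interpreting letters of an alphabet E, and let I[p] denote the interpretation of a regular expression p over E (interpreting ∅ as 0, ε as 1, a letter e as sem(e), + as ⊕, · as ⊙, and * as ⋆). Then for any word w = e₁⋯eₙ in the language of p, sem(e₁) ⊙ ⋯ ⊙ sem(eₙ) ≤ I[p]. -/
/-- A pre-Kleene algebra: join-semilattice with least element 0, a monoid (⊙,1),
pre-distributivity of ⊙ over ⊕, and the iteration axioms.  The order is `a ≤ b ↔ a ⊕ b = b`. -/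
structure PKA (K : Type*) where
  add : K → K → K
  mul : K → K → K
  star : K → K
  zero : K
  one : K
  add_assoc : ∀ a b c, add (add a b) c = add a (add b c)
  add_comm : ∀ a b, add a b = add b a
  add_idem : ∀ a, add a a = a
  add_zero : ∀ a, add a zero = a
  mul_assoc : ∀ a b c, mul (mul a b) c = mul a (mul b c)
  one_mul : ∀ a, mul one a = a
  mul_one : ∀ a, mul a one = a
  /-- (a⊙b)⊕(a⊙c) ≤ a⊙(b⊕c) -/
  left_pre : ∀ a b c, add (add (mul a b) (mul a c)) (mul a (add b c)) = mul a (add b c)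
  /-- (a⊙c)⊕(b⊙c) ≤ (a⊕b)⊙c -/
  right_pre : ∀ a b c, add (add (mul a c) (mul b c)) (mul (add a b) c) = mul (add a b) c
  /-- 1 ⊕ (a ⊙ a⋆) ≤ a⋆ -/
  star_unfold_l : ∀ a, add (add one (mul a (star a))) (star a) = star a
  /-- 1 ⊕ (a⋆ ⊙ a) ≤ a⋆ -/
  star_unfold_r : ∀ a, add (add one (mul (star a) a)) (star a) = star a

/-- The semilattice order: `a ≤ b` iff `a ⊕ b = b`. -/
def PKA.le {K : Type*} (P : PKA K) (a b : K) : Prop := P.add a b = b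

/-- n-fold product: `a^0 = 1`, `a^(n+1) = a^n ⊙ a`. -/
def PKA.pow {K : Type*} (P : PKA K) (a : K) : ℕ → K
  | 0 => P.one
  | n + 1 => P.mul (P.pow a n) a

/-- Regular expressions over alphabet `E`. -/
inductive RegExp (E : Type*) where
  | zero : RegExp E
  | eps : RegExp E
  | char : E → RegExp E
  | plus : RegExp E → RegExp E → RegExp E
  | cat : RegExp E → RegExp E → RegExp E
  | star : RegExp E → RegExp E

/-- The language of a regular expression. -/
def RegExp.lang {E : Type*} : RegExp E → Language E
  | .zero => 0
  | .eps => 1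
  | .char e => {[e]}
  | .plus p q => p.lang + q.lang
  | .cat p q => p.lang * q.lang
  | .star p => KStar.kstar p.lang

/-- Interpretation of a regular expression in a PKA. -/
def PKA.interp {K E : Type*} (P : PKA K) (sem : E → K) : RegExp E → K
  | .zero => P.zero
  | .eps => P.one
  | .char e => sem e
  | .plus p q => P.add (P.interp sem p) (P.interp sem q)
  | .cat p q => P.mul (P.interp sem p) (P.interp sem q)
  | .star p => P.star (P.interp sem p)

/-- Interpretation of a word: `sem e₁ ⊙ ⋯ ⊙ sem eₙ` (the empty word is `1`). -/
def PKA.semWord {K E : Type*} (P : PKA K) (sem : E → K) (w : List E) : K :=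
  w.foldr (fun e k => P.mul (sem e) k) P.one


namespace PKAAux
variable {K : Type*} (P : PKA K)

lemma le_refl (a : K) : P.le a a := P.add_idem a

lemma le_trans {a b c : K} (h1 : P.le a b) (h2 : P.le b c) : P.le a c := by
  unfold PKA.le at *
  rw [← h2, ← P.add_assoc, h1]

lemma le_add_left (a b : K) : P.le a (P.add a b) := by
  unfold PKA.le
  rw [← P.add_assoc, P.add_idem]

lemma le_add_right (a b : K) : P.le b (P.add a b) := by
  unfold PKA.le
  rw [P.add_comm a b, ← P.add_assoc, P.add_idem]

lemma add_le {a b c : K} (h1 : P.le a c) (h2 : P.le b c) : P.le (P.add a b) c := by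
  unfold PKA.le at *
  rw [P.add_assoc, h2, h1]

lemma mul_le_mul {a a' b b' : K} (h1 : P.le a a') (h2 : P.le b b') :
    P.le (P.mul a b) (P.mul a' b') := by
  have hl : P.le (P.mul a' b) (P.mul a' b') := by
    have := P.left_pre a' b b'
    rw [h2] at this
    exact le_trans P (le_add_left P _ _) this
  have hr : P.le (P.mul a b) (P.mul a' b) := by
    have := P.right_pre a a' b
    rw [h1] at this
    exact le_trans P (le_add_left P _ _) this
  exact le_trans P hr hl

lemma one_le_star (a : K) : P.le P.one (P.star a) := by
  have h : P.le (P.add P.one (P.mul a (P.star a))) (P.star a) := P.star_unfold_l a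
  exact le_trans P (le_add_left P _ _) h

lemma mul_star_le_star (a : K) : P.le (P.mul a (P.star a)) (P.star a) := by
  have h : P.le (P.add P.one (P.mul a (P.star a))) (P.star a) := P.star_unfold_l a
  exact le_trans P (le_add_right P _ _) h

lemma semWord_append {E : Type*} (sem : E → K) (u v : List E) :
    P.semWord sem (u ++ v) = P.mul (P.semWord sem u) (P.semWord sem v) := by
  induction u with
  | nil => simp [PKA.semWord, P.one_mul]
  | cons e u ih => simp [PKA.semWord, List.foldr] at *; rw [ih, P.mul_assoc]

end PKAAux

/-- Correctness: the interpretation of every word in the language of `p` is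
approximated by the interpretation of `p`. -/
theorem pka_correctness {K E : Type*} (P : PKA K) (sem : E → K) (p : RegExp E)
    (w : List E) (hw : w ∈ p.lang) : P.le (P.semWord sem w) (P.interp sem p) := by
  induction p generalizing w with
  | zero => simp [RegExp.lang] at hw
  | eps =>
    simp [RegExp.lang, Language.mem_one] at hw
    subst hw
    exact PKAAux.le_refl P _
  | char e =>
    simp [RegExp.lang] at hw
    subst hw
    simp [PKA.semWord, PKA.interp, P.mul_one]
    exact PKAAux.le_refl P _
  | plus p q ihp ihq =>
    rcases hw with h | h
    · exact PKAAux.le_trans P (ihp _ h) (PKAAux.le_add_left P _ _)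
    · exact PKAAux.le_trans P (ihq _ h) (PKAAux.le_add_right P _ _)
  | cat p q ihp ihq =>
    rcases hw with ⟨u, hu, v, hv, rfl⟩
    rw [PKAAux.semWord_append]
    exact PKAAux.mul_le_mul P (ihp _ hu) (ihq _ hv)
  | star p ihp =>
    rw [RegExp.lang, Language.mem_kstar] at hw
    obtain ⟨L, rfl, hL⟩ := hw
    induction L with
    | nil => exact PKAAux.one_le_star P _
    | cons u L ih =>
      rw [List.flatten_cons, PKAAux.semWord_append]
      have h1 : P.le (P.semWord sem u) (P.interp sem p) := ihp _ (hL _ (by simp))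
      have h2 := ih (fun y hy => hL y (by simp [hy]))
      exact PKAAux.le_trans P (PKAAux.mul_le_mul P h1 h2) (PKAAux.mul_star_le_star P _)
end

section
/- For binary relations over environments, the quantification operator satisfies axiom (Q2): ∃x. ((∃x. R) ⊙ S) = (∃x. R) ⊙ (∃x. S), where ⊙ is relational composition and ∃x. R = {(ρ[x←n], ρ'[x←n]) : (ρ,ρ') ∈ R, n ∈ ℤ}. -/
/-- Existential quantification of a variable in a relation over environments:
`∃x. R = {(ρ[x←n], ρ'[x←n]) : (ρ,ρ') ∈ R, n ∈ ℤ}`. -/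
def exQ {Var : Type*} [DecidableEq Var] (x : Var)
    (R : Set ((Var → ℤ) × (Var → ℤ))) : Set ((Var → ℤ) × (Var → ℤ)) :=
  {p | ∃ (ρ ρ' : Var → ℤ) (n : ℤ), (ρ, ρ') ∈ R ∧ p.1 = Function.update ρ x n ∧ p.2 = Function.update ρ' x n}

/-- Relational composition. -/
def rcomp {A : Type*} (R S : Set (A × A)) : Set (A × A) :=
  {p | ∃ ρ', (p.1, ρ') ∈ R ∧ (ρ', p.2) ∈ S}

/-- (Q2): `∃x. ((∃x. R) ⊙ S) = (∃x. R) ⊙ (∃x. S)`. -/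
theorem exQ_Q2 {Var : Type*} [DecidableEq Var] (x : Var)
    (R S : Set ((Var → ℤ) × (Var → ℤ))) :
    exQ x (rcomp (exQ x R) S) = rcomp (exQ x R) (exQ x S) := by
  ext ⟨p1, p2⟩
  simp only [exQ, rcomp, Set.mem_setOf_eq]
  constructor
  · rintro ⟨ρ, ρ', n, ⟨σ, ⟨a, b, m, hab, hρ, hσ⟩, hS⟩, h1, h2⟩
    refine ⟨Function.update b x n,
      ⟨a, b, n, hab, by rw [h1, hρ, Function.update_idem], rfl⟩,
      ⟨σ, ρ', n, hS, by rw [hσ, Function.update_idem], h2⟩⟩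
  · rintro ⟨τ, ⟨a, b, m, hab, h1, hτ⟩, ⟨c, d, n, hcd, hτ', h2⟩⟩
    have hmn : m = n := by
      have := congrFun (hτ.symm.trans hτ') x
      simpa using this
    subst hmn
    have hbc : c = Function.update b x (c x) := by
      funext y
      rcases eq_or_ne y x with rfl | hy
      · simp
      · have := congrFun (hτ.symm.trans hτ') y
        simpa [Function.update_of_ne hy] using this.symm
    refine ⟨Function.update a x (c x), d, m,
      ⟨c, ⟨a, b, c x, hab, rfl, hbc⟩, hcd⟩,
      by rw [h1, Function.update_idem], h2⟩
end
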